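/- For every d < ω, the graph on vertex set (2²)^d whose edges are the two-element up-1-combs is a cograph. -/

import Mathlib

/-- The index square `2²`. -/
abbrev Sq : Type := Fin 2 × Fin 2

/-- `{σ, τ}` is an up-1-comb: at the end of the longest common prefix the two
sequences have the same first coordinate and different second coordinates. -/
def UpPair {d : ℕ} (σ τ : Fin d → Sq) : Prop :=
  ∃ t : Fin d, (∀ s, s < t → σ s = τ s) ∧ (σ t).1 = (τ t).1 ∧ (σ t).2 ≠ (τ t).2

/-- Auxiliary relation for the disjoint union of two graphs. -/
def sumRel {V W : Type} (G : SimpleGraph V) (H : SimpleGraph W) : V ⊕ W → V ⊕ W → Prop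
  | .inl v, .inl v' => G.Adj v v'
  | .inr w, .inr w' => H.Adj w w'
  | _, _ => False

/-- Disjoint union (coproduct) of two simple graphs. -/
def sumGraph {V W : Type} (G : SimpleGraph V) (H : SimpleGraph W) : SimpleGraph (V ⊕ W) :=
  SimpleGraph.fromRel (sumRel G H)

/-- Auxiliary relation for the join of two graphs. -/
def joinRel {V W : Type} (G : SimpleGraph V) (H : SimpleGraph W) : V ⊕ W → V ⊕ W → Prop
  | .inl v, .inl v' => G.Adj v v'
  | .inr w, .inr w' => H.Adj w w'
  | _, _ => True

/-- Graph join of two simple graphs: disjoint union plus all cross edges. -/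
def joinGraph {V W : Type} (G : SimpleGraph V) (H : SimpleGraph W) : SimpleGraph (V ⊕ W) :=
  SimpleGraph.fromRel (joinRel G H)

/-- Cographs: the smallest class of graphs (up to isomorphism) containing the
one-vertex graph and closed under disjoint unions and graph joins. -/
inductive IsCograph : {V : Type} → SimpleGraph V → Prop
  | single : IsCograph (⊥ : SimpleGraph PUnit)
  | iso {V W : Type} {G : SimpleGraph V} {H : SimpleGraph W} (e : G ≃g H) :
      IsCograph G → IsCograph H
  | coprod {V W : Type} {G : SimpleGraph V} {H : SimpleGraph W} :
      IsCograph G → IsCograph H → IsCograph (sumGraph G H)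
  | join {V W : Type} {G : SimpleGraph V} {H : SimpleGraph W} :
      IsCograph G → IsCograph H → IsCograph (joinGraph G H)

/-- For every `d`, the graph on `(2²)^d` whose edges are the two-element
up-1-combs is a cograph. -/
lemma upPair_symm {d : ℕ} {σ τ : Fin d → Sq} (h : UpPair σ τ) : UpPair τ σ := by
  obtain ⟨t, h1, h2, h3⟩ := h
  exact ⟨t, fun s hs => (h1 s hs).symm, h2.symm, fun h => h3 h.symm⟩

lemma upPair_ne {d : ℕ} {σ τ : Fin d → Sq} (h : UpPair σ τ) : σ ≠ τ := by
  obtain ⟨t, _, _, h3⟩ := h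
  intro he; exact h3 (by rw [he])

lemma adj_iff {d : ℕ} {σ τ : Fin d → Sq} :
    (SimpleGraph.fromRel (fun σ τ : Fin d → Sq => UpPair σ τ)).Adj σ τ ↔ UpPair σ τ := by
  constructor
  · rintro ⟨_, h | h⟩
    · exact h
    · exact upPair_symm h
  · exact fun h => ⟨upPair_ne h, Or.inl h⟩

lemma upPair_cons {d : ℕ} (s t : Sq) (a b : Fin d → Sq) :
    UpPair (Fin.cons s a) (Fin.cons t b) ↔ (s.1 = t.1 ∧ s.2 ≠ t.2) ∨ (s = t ∧ UpPair a b) := by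
  constructor
  · rintro ⟨u, h1, h2, h3⟩
    induction u using Fin.cases with
    | zero => left; simpa using ⟨h2, h3⟩
    | succ i =>
      right
      have hst : s = t := by simpa using h1 0 (Fin.succ_pos i)
      refine ⟨hst, i, fun j hj => ?_, by simpa using h2, by simpa using h3⟩
      simpa using h1 j.succ (by simpa [Fin.succ_lt_succ_iff] using hj)
  · rintro (⟨h2, h3⟩ | ⟨hst, i, h1, h2, h3⟩)
    · exact ⟨0, fun s hs => absurd hs (by simp), by simpa using h2, by simpa using h3⟩
    · refine ⟨i.succ, fun j hj => ?_, by simpa using h2, by simpa using h3⟩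
      induction j using Fin.cases with
      | zero => simpa using hst
      | succ k => simpa using h1 k (by simpa [Fin.succ_lt_succ_iff] using hj)

lemma upPair_comm {d : ℕ} {σ τ : Fin d → Sq} : UpPair τ σ ↔ UpPair σ τ :=
  ⟨upPair_symm, upPair_symm⟩

lemma ne_and_upPair {d : ℕ} {a b : Fin d → Sq} : (¬a = b ∧ UpPair a b) ↔ UpPair a b :=
  ⟨fun h => h.2, fun h => ⟨upPair_ne h, h⟩⟩

def ofSum {d : ℕ} :
    ((Fin d → Sq) ⊕ (Fin d → Sq)) ⊕ ((Fin d → Sq) ⊕ (Fin d → Sq)) → (Fin (d+1) → Sq)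
  | .inl (.inl a) => Fin.cons (0,0) a
  | .inl (.inr a) => Fin.cons (0,1) a
  | .inr (.inl a) => Fin.cons (1,0) a
  | .inr (.inr a) => Fin.cons (1,1) a

def toSum {d : ℕ} (σ : Fin (d+1) → Sq) :
    ((Fin d → Sq) ⊕ (Fin d → Sq)) ⊕ ((Fin d → Sq) ⊕ (Fin d → Sq)) :=
  if (σ 0).1 = 0 then
    if (σ 0).2 = 0 then .inl (.inl (Fin.tail σ)) else .inl (.inr (Fin.tail σ))
  else
    if (σ 0).2 = 0 then .inr (.inl (Fin.tail σ)) else .inr (.inr (Fin.tail σ))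

lemma fin2_ne_zero {i : Fin 2} (h : i ≠ 0) : i = 1 := by omega

def sumEquiv {d : ℕ} :
    (((Fin d → Sq) ⊕ (Fin d → Sq)) ⊕ ((Fin d → Sq) ⊕ (Fin d → Sq))) ≃ (Fin (d+1) → Sq) where
  toFun := ofSum
  invFun := toSum
  left_inv x := by
    rcases x with (a | a) | (a | a) <;>
      simp [ofSum, toSum, Fin.tail_cons]
  right_inv σ := by
    have key : ∀ s : Sq, σ 0 = s → ofSum (toSum σ) = σ := by
      intro s hs
      unfold toSum
      split_ifs with h1 h2 h3 <;>
        simp only [ofSum] <;>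
        rw [show ((_,_) : Sq) = σ 0 from (Prod.ext (by first | exact h1.symm | exact (fin2_ne_zero h1).symm) (by first | exact h2.symm | exact h3.symm | exact (fin2_ne_zero h2).symm | exact (fin2_ne_zero h3).symm)), Fin.cons_self_tail]
    exact key (σ 0) rfl

set_option maxHeartbeats 1000000 in
theorem stmt_4 (d : ℕ) :
    IsCograph (SimpleGraph.fromRel (fun σ τ : Fin d → Sq => UpPair σ τ)) := by
  induction d with
  | zero =>
    refine IsCograph.iso ⟨Equiv.ofUnique PUnit (Fin 0 → Sq), ?_⟩ IsCograph.single
    intro a b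
    simp only [SimpleGraph.bot_adj, iff_false]
    rintro ⟨hne, _⟩
    exact hne (funext fun i => i.elim0)
  | succ d ih =>
    refine IsCograph.iso (H := SimpleGraph.fromRel (fun σ τ : Fin (d+1) → Sq => UpPair σ τ))
      ⟨sumEquiv, ?_⟩ (IsCograph.coprod (IsCograph.join ih ih) (IsCograph.join ih ih))
    rintro ((a | a) | (a | a)) ((b | b) | (b | b)) <;>
      simp only [sumEquiv, Equiv.coe_fn_mk, ofSum, adj_iff, upPair_cons, sumGraph, joinGraph,
        sumRel, joinRel, SimpleGraph.fromRel_adj, ne_eq, adj_iff, upPair_comm, ne_and_upPair,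
        Prod.mk.injEq] <;>
      first
        | (intro h; exact absurd h (by decide))
        | (intro _; tauto)
        | tauto
        | decide
        | (simp_all <;>
            first
             | tauto
             | (intro h; exact absurd h (by decide)))
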